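/- Let φ: ℝ^d → ℝ be differentiable, let Z = ∑_{z∈ℤ^d} e^{−φ(z)} be finite and positive, and define π̄(x) = (1/Z) · 2e^{−φ([x])} / (1 + exp(2⟨x − [x], ∇φ([x])⟩)), where [x] is the coordinate-wise rounding of x to the nearest integer point. Then for every z ∈ ℤ^d, the integral of π̄ over the unit hypercube z + [−1/2, 1/2]^d centered at z equals e^{−φ(z)}/Z. In other words, if X is a random vector with density π̄, then the coordinate-wise rounding [X] has distribution P_{ℤ^d}(z) = e^{−φ(z)}/Z. -/

import Mathlib

open Real MeasureTheory
open scoped RealInnerProductSpace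

/-- Coordinate-wise rounding of a vector in `ℝ^d` to the nearest integer point. -/
noncomputable def roundVec {d : ℕ} (x : EuclideanSpace ℝ (Fin d)) :
    EuclideanSpace ℝ (Fin d) :=
  WithLp.toLp 2 (fun i => (round (x i) : ℝ))

/-- Rounding a sample from `π̄` gives a sample from `P_{ℤ^d}`: for every `z ∈ ℤ^d`, the
integral of `π̄(x) = (1/Z)·2e^{−φ([x])}/(1 + exp(2⟨x−[x], ∇φ([x])⟩))` over the unit
hypercube `z + [−1/2, 1/2]^d` equals `e^{−φ(z)}/Z`. -/
theorem stmt4 {d : ℕ} (hd : 1 ≤ d) (φ : EuclideanSpace ℝ (Fin d) → ℝ)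
    (hdiff : Differentiable ℝ φ)
    (Z : ℝ)
    (hZ : Z = ∑' z : Fin d → ℤ, Real.exp (-φ (WithLp.toLp 2 (fun i => (z i : ℝ)))))
    (hZpos : 0 < Z)
    (pb : EuclideanSpace ℝ (Fin d) → ℝ)
    (hpb : ∀ x, pb x = (1 / Z) * (2 * Real.exp (-φ (roundVec x)) /
      (1 + Real.exp (2 * ⟪x - roundVec x, gradient φ (roundVec x)⟫))))
    (z : Fin d → ℤ) :
    ∫ x in {x : EuclideanSpace ℝ (Fin d) |
        ∀ i, x i ∈ Set.Icc ((z i : ℝ) - 1/2) ((z i : ℝ) + 1/2)}, pb x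
      = Real.exp (-φ (WithLp.toLp 2 (fun i => (z i : ℝ)))) / Z := by
  set c : EuclideanSpace ℝ (Fin d) := WithLp.toLp 2 (fun i => (z i : ℝ)) with hc
  set G : EuclideanSpace ℝ (Fin d) := gradient φ c with hG
  set S : Set (EuclideanSpace ℝ (Fin d)) :=
    {x | ∀ i, x i ∈ Set.Icc ((z i : ℝ) - 1/2) ((z i : ℝ) + 1/2)} with hS
  set ψ := (MeasurableEquiv.toLp 2 (Fin d → ℝ)).symm with hψ
  have hψ_apply : ∀ (x : EuclideanSpace ℝ (Fin d)) i, ψ x i = x i := by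
    intro x i
    rfl
  have hSpre : S = ψ ⁻¹' (Set.univ.pi fun i => Set.Icc ((z i : ℝ) - 1/2) ((z i : ℝ) + 1/2)) := by
    ext x
    simp only [Set.mem_preimage, Set.mem_pi, Set.mem_univ, true_implies, hS, Set.mem_setOf_eq,
      hψ_apply]
  have hSmeas : MeasurableSet S := by
    rw [hSpre]
    exact ψ.measurable (MeasurableSet.univ_pi fun i => measurableSet_Icc)
  have hSvol : volume S = 1 := by
    rw [hSpre, (EuclideanSpace.volume_preserving_symm_measurableEquiv_toLp (Fin d)).measure_preimage
      (MeasurableSet.univ_pi fun i => measurableSet_Icc).nullMeasurableSet]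
    rw [volume_pi_pi]
    have : ∀ i : Fin d, volume (Set.Icc ((z i : ℝ) - 1/2) ((z i : ℝ) + 1/2)) = 1 := by
      intro i
      rw [Real.volume_Icc]
      norm_num
    rw [Finset.prod_congr rfl (fun i _ => this i)]
    simp
  -- hyperplanes have measure zero
  have hplane : ∀ i : Fin d, volume {x : EuclideanSpace ℝ (Fin d) | x i = (z i : ℝ) + 1/2} = 0 := by
    intro i
    have heq : {x : EuclideanSpace ℝ (Fin d) | x i = (z i : ℝ) + 1/2}
        = ψ ⁻¹' (Set.univ.pi fun j => if j = i then {(z i : ℝ) + 1/2} else Set.univ) := by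
      ext x
      simp only [Set.mem_preimage, Set.mem_pi, Set.mem_univ, true_implies, Set.mem_setOf_eq]
      constructor
      · intro h j
        by_cases hj : j = i <;> simp [hj, hψ_apply, h]
      · intro h
        have := h i
        simpa [hψ_apply] using this
    rw [heq, (EuclideanSpace.volume_preserving_symm_measurableEquiv_toLp (Fin d)).measure_preimage
      ((MeasurableSet.univ_pi fun j => by
        by_cases hj : j = i <;> simp [hj])).nullMeasurableSet]
    rw [volume_pi_pi]
    apply Finset.prod_eq_zero (Finset.mem_univ i)
    simp
  have hBzero : volume (⋃ i : Fin d, {x : EuclideanSpace ℝ (Fin d) | x i = (z i : ℝ) + 1/2}) = 0 :=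
    le_antisymm ((measure_iUnion_le _).trans (by rw [tsum_congr hplane]; simp)) zero_le
  -- rounding equals c on S away from the bad set
  have hround : ∀ x ∈ S,
      x ∉ (⋃ i : Fin d, {x : EuclideanSpace ℝ (Fin d) | x i = (z i : ℝ) + 1/2}) →
      roundVec x = c := by
    intro x hx hxB
    ext i
    have h1 := hx i
    have h2 : x i ≠ (z i : ℝ) + 1/2 := fun h => hxB (Set.mem_iUnion.2 ⟨i, h⟩)
    have hlt : x i < (z i : ℝ) + 1/2 := lt_of_le_of_ne h1.2 h2
    have hr : round (x i) = z i := by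
      rw [round_eq, Int.floor_eq_iff]
      constructor
      · push_cast; linarith [h1.1]
      · push_cast; linarith
    show (round (x i) : ℝ) = (z i : ℝ)
    rw [hr]
  set K : ℝ := (1 / Z) * (2 * Real.exp (-φ c)) with hK
  set h : EuclideanSpace ℝ (Fin d) → ℝ :=
    fun x => 1 / (1 + Real.exp (2 * ⟪x - c, G⟫)) with hh
  have hdenpos : ∀ a : ℝ, (0:ℝ) < 1 + Real.exp a := fun a => by positivity
  have hcongr : ∀ᵐ x ∂volume, x ∈ S → pb x = K * h x := by
    filter_upwards [measure_eq_zero_iff_ae_notMem.mp hBzero] with x hxB hxS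
    rw [hpb x, hround x hxS hxB, hK, hh]
    have := (hdenpos (2 * ⟪x - c, G⟫)).ne'
    field_simp
    rfl
  rw [setIntegral_congr_ae hSmeas hcongr, integral_const_mul]
  -- symmetry: ∫_S h = 1/2
  have hhcont : Continuous h := by
    apply Continuous.div continuous_const
    · exact continuous_const.add ((continuous_const.mul
        ((continuous_id.sub continuous_const).inner continuous_const)).rexp)
    · intro x; exact ne_of_gt (hdenpos _)
  have hhbound : ∀ x, ‖h x‖ ≤ 1 := by
    intro x
    rw [hh, Real.norm_eq_abs, abs_of_nonneg (by positivity)]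
    rw [div_le_one (hdenpos _)]
    linarith [Real.exp_pos (2 * ⟪x - c, G⟫)]
  have hSfin : volume S ≠ ⊤ := by rw [hSvol]; exact ENNReal.one_ne_top
  have hint : ∀ f : EuclideanSpace ℝ (Fin d) → ℝ, Continuous f → (∀ x, ‖f x‖ ≤ 1) →
      IntegrableOn f S volume := fun f hf hb =>
    Measure.integrableOn_of_bounded hSfin hf.aestronglyMeasurable (Filter.Eventually.of_forall hb)
  set r : EuclideanSpace ℝ (Fin d) → EuclideanSpace ℝ (Fin d) := fun x => (c + c) - x with hr
  have hrMP : MeasurePreserving r volume volume :=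
    MeasureTheory.Measure.measurePreserving_sub_left volume (c + c)
  have hrE : MeasurableEmbedding r := (MeasurableEquiv.subLeft (c + c)).measurableEmbedding
  have happ : ∀ (x : EuclideanSpace ℝ (Fin d)) i, ((c + c) - x : EuclideanSpace ℝ (Fin d)) i
      = 2 * (z i : ℝ) - x i := by
    intro x i
    show c i + c i - x i = 2 * (z i : ℝ) - x i
    rw [hc]
    ring
  have hrS : r ⁻¹' S = S := by
    ext x
    simp only [Set.mem_preimage, hS, Set.mem_setOf_eq, hr, Set.mem_Icc]
    constructor
    · intro hx i
      have := hx i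
      rw [happ x i] at this
      exact ⟨by linarith [this.2], by linarith [this.1]⟩
    · intro hx i
      rw [happ x i]
      exact ⟨by linarith [(hx i).2], by linarith [(hx i).1]⟩
  have hrefl : ∫ x in S, h (r x) = ∫ x in S, h x := by
    conv_lhs => rw [← hrS]
    exact hrMP.setIntegral_preimage_emb hrE h S
  have hsum : ∀ x, h x + h (r x) = 1 := by
    intro x
    have hneg : r x - c = -(x - c) := by
      show c + c - x - c = -(x - c)
      abel
    rw [hh]
    simp only [hneg, inner_neg_left]
    have e1 : Real.exp (2 * -⟪x - c, G⟫) = (Real.exp (2 * ⟪x - c, G⟫))⁻¹ := by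
      rw [← Real.exp_neg]; ring_nf
    rw [e1]
    have hp := Real.exp_pos (2 * ⟪x - c, G⟫)
    have hp1 := hdenpos (2 * ⟪x - c, G⟫)
    field_simp
    ring
  have hIsum : (∫ x in S, h x) + (∫ x in S, h (r x)) = 1 := by
    rw [← integral_add (hint h hhcont hhbound)
      (hint (fun x => h (r x)) (hhcont.comp (continuous_const.sub continuous_id))
        (fun x => hhbound _))]
    rw [setIntegral_congr_fun hSmeas (fun x _ => hsum x), setIntegral_const, measureReal_def, hSvol]
    simp
  rw [hrefl] at hIsum
  have hI : ∫ x in S, h x = 1/2 := by linarith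
  rw [hI, hK]
  field_simp
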